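/- Let 1 ≤ p < ∞ and 1 < q, r < ∞ with 1 + 1/q = 1/p + 1/r. If Ω is homogeneous of degree 0 with Ω ∈ L^{n/(n−α)}(S^{n−1}) for α ∈ (0,n), then the fractional integral T_Ω^α f(x) = ∫ Ω(x−y)|x−y|^{α−n} f(y) dy is bounded from L¹(ℝⁿ) to L^{n/(n−α),∞}(ℝⁿ), with norm ≲ ‖Ω‖_{L^{n/(n−α)}(S^{n−1})}. -/

import Mathlib

open MeasureTheory Metric Set Filter
open scoped ENNReal Topology

noncomputable section Stmt15Aux

/-- Polar coordinates for lower integrals on Euclidean space. -/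
theorem stmt15_polar {n : ℕ} (hn : 0 < n) (F : EuclideanSpace ℝ (Fin n) → ℝ≥0∞)
    (hF : Measurable F) :
    ∫⁻ x, F x = ∫⁻ θ : sphere (0 : EuclideanSpace ℝ (Fin n)) 1,
      ∫⁻ r in Ioi (0:ℝ), ENNReal.ofReal (r ^ (n - 1)) * F (r • (θ : EuclideanSpace ℝ (Fin n)))
        ∂volume ∂(volume : Measure (EuclideanSpace ℝ (Fin n))).toSphere := by
  have hdim : Module.finrank ℝ (EuclideanSpace ℝ (Fin n)) = n := finrank_euclideanSpace_fin
  haveI : Nontrivial (EuclideanSpace ℝ (Fin n)) := by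
    apply Module.nontrivial_of_finrank_pos (R := ℝ)
    rw [hdim]; exact hn
  have hmeas : Measurable fun p : sphere (0 : EuclideanSpace ℝ (Fin n)) 1 × Ioi (0:ℝ) =>
      F ((p.2 : ℝ) • (p.1 : EuclideanSpace ℝ (Fin n))) :=
    hF.comp ((measurable_subtype_coe.comp measurable_snd).smul
      (measurable_subtype_coe.comp measurable_fst))
  calc ∫⁻ x, F x
      = ∫⁻ x in ({0}ᶜ : Set (EuclideanSpace ℝ (Fin n))), F x := by
        rw [MeasureTheory.restrict_compl_singleton]
    _ = ∫⁻ x : ({0}ᶜ : Set (EuclideanSpace ℝ (Fin n))), F x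
          ∂((volume : Measure (EuclideanSpace ℝ (Fin n))).comap Subtype.val) :=
        (lintegral_subtype_comap (measurableSet_singleton 0).compl _).symm
    _ = ∫⁻ p : sphere (0 : EuclideanSpace ℝ (Fin n)) 1 × Ioi (0:ℝ),
          F ((p.2 : ℝ) • (p.1 : EuclideanSpace ℝ (Fin n)))
          ∂((volume : Measure (EuclideanSpace ℝ (Fin n))).toSphere.prod
            (Measure.volumeIoiPow (Module.finrank ℝ (EuclideanSpace ℝ (Fin n)) - 1))) := by
        rw [← (Measure.measurePreserving_homeomorphUnitSphereProd
          (volume : Measure (EuclideanSpace ℝ (Fin n)))).lintegral_comp_emb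
          (Homeomorph.measurableEmbedding _)
          (fun p => F ((p.2 : ℝ) • (p.1 : EuclideanSpace ℝ (Fin n))))]
        refine lintegral_congr fun x => ?_
        have hx : ‖(x : EuclideanSpace ℝ (Fin n))‖ ≠ 0 := norm_ne_zero_iff.2 x.2
        simp [smul_smul, mul_inv_cancel₀ hx]
    _ = ∫⁻ θ : sphere (0 : EuclideanSpace ℝ (Fin n)) 1,
          ∫⁻ r : Ioi (0:ℝ), F ((r : ℝ) • (θ : EuclideanSpace ℝ (Fin n)))
            ∂(Measure.volumeIoiPow (n - 1))
          ∂(volume : Measure (EuclideanSpace ℝ (Fin n))).toSphere := by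
        rw [hdim, lintegral_prod _ hmeas.aemeasurable]
    _ = _ := by
        refine lintegral_congr fun θ => ?_
        have hg : Measurable fun r : Ioi (0:ℝ) =>
            F ((r : ℝ) • (θ : EuclideanSpace ℝ (Fin n))) :=
          hF.comp (measurable_subtype_coe.smul measurable_const)
        rw [Measure.volumeIoiPow, lintegral_withDensity_eq_lintegral_mul _
          ((measurable_subtype_coe.pow_const _).ennreal_ofReal) hg]
        rw [← lintegral_subtype_comap measurableSet_Ioi
          (fun r : ℝ => ENNReal.ofReal (r ^ (n - 1)) *
            F (r • (θ : EuclideanSpace ℝ (Fin n))))]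
        exact lintegral_congr fun r => rfl

theorem stmt15_kernel {n : ℕ} (α : ℝ) (hα0 : 0 < α) (hαn : α < n)
    (Ω : EuclideanSpace ℝ (Fin n) → ℝ) (hΩm : Measurable Ω)
    (hΩhom : ∀ s : ℝ, 0 < s → ∀ x : EuclideanSpace ℝ (Fin n), Ω (s • x) = Ω x)
    (M : ℝ) (hM : 0 < M) :
    (∫⁻ x : EuclideanSpace ℝ (Fin n),
      if ENNReal.ofReal M < ENNReal.ofReal (|Ω x| * ‖x‖ ^ (α - (n:ℝ))) then
        ENNReal.ofReal (|Ω x| * ‖x‖ ^ (α - (n:ℝ))) else 0)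
      = ENNReal.ofReal (M ^ (1 - (n:ℝ)/((n:ℝ)-α)) / α) *
        ∫⁻ θ : sphere (0 : EuclideanSpace ℝ (Fin n)) 1,
          ENNReal.ofReal (|Ω (θ : EuclideanSpace ℝ (Fin n))| ^ ((n:ℝ)/((n:ℝ)-α)))
          ∂(volume : Measure (EuclideanSpace ℝ (Fin n))).toSphere := by
  have hn : 0 < n := by exact_mod_cast hα0.trans hαn
  have hnα : (0:ℝ) < (n:ℝ) - α := by linarith
  set s : ℝ := (n:ℝ)/((n:ℝ)-α) with hs_def
  have hk : Measurable fun x : EuclideanSpace ℝ (Fin n) =>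
      ENNReal.ofReal (|Ω x| * ‖x‖ ^ (α - (n:ℝ))) :=
    (hΩm.abs.mul (by measurability)).ennreal_ofReal
  have hF : Measurable fun x : EuclideanSpace ℝ (Fin n) =>
      (if ENNReal.ofReal M < ENNReal.ofReal (|Ω x| * ‖x‖ ^ (α - (n:ℝ))) then
        ENNReal.ofReal (|Ω x| * ‖x‖ ^ (α - (n:ℝ))) else 0) :=
    Measurable.ite (measurableSet_lt measurable_const hk) hk measurable_const
  rw [stmt15_polar hn _ hF]
  have inner : ∀ θ : sphere (0 : EuclideanSpace ℝ (Fin n)) 1,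
      (∫⁻ r in Ioi (0:ℝ), ENNReal.ofReal (r ^ (n - 1)) *
        (if ENNReal.ofReal M <
            ENNReal.ofReal (|Ω (r • (θ : EuclideanSpace ℝ (Fin n)))| *
              ‖r • (θ : EuclideanSpace ℝ (Fin n))‖ ^ (α - (n:ℝ))) then
          ENNReal.ofReal (|Ω (r • (θ : EuclideanSpace ℝ (Fin n)))| *
            ‖r • (θ : EuclideanSpace ℝ (Fin n))‖ ^ (α - (n:ℝ))) else 0) ∂volume)
      = ENNReal.ofReal (M ^ (1 - s) / α) *
          ENNReal.ofReal (|Ω (θ : EuclideanSpace ℝ (Fin n))| ^ s) := by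
    intro θ
    have hθ : ‖(θ : EuclideanSpace ℝ (Fin n))‖ = 1 := by
      have := θ.2; rwa [mem_sphere_zero_iff_norm] at this
    set c : ℝ := |Ω (θ : EuclideanSpace ℝ (Fin n))| with hc_def
    have hc0 : 0 ≤ c := abs_nonneg _
    have hpt : ∀ r : ℝ, r ∈ Ioi (0:ℝ) →
        ENNReal.ofReal (r ^ (n - 1)) *
        (if ENNReal.ofReal M <
            ENNReal.ofReal (|Ω (r • (θ : EuclideanSpace ℝ (Fin n)))| *
              ‖r • (θ : EuclideanSpace ℝ (Fin n))‖ ^ (α - (n:ℝ))) then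
          ENNReal.ofReal (|Ω (r • (θ : EuclideanSpace ℝ (Fin n)))| *
            ‖r • (θ : EuclideanSpace ℝ (Fin n))‖ ^ (α - (n:ℝ))) else 0)
        = (if M < c * r ^ (α - (n:ℝ)) then ENNReal.ofReal (c * r ^ (α - 1)) else 0) := by
      intro r hr
      rw [mem_Ioi] at hr
      have h1 : Ω (r • (θ : EuclideanSpace ℝ (Fin n))) = Ω (θ : EuclideanSpace ℝ (Fin n)) :=
        hΩhom r hr _
      have h2 : ‖r • (θ : EuclideanSpace ℝ (Fin n))‖ = r := by
        rw [norm_smul, hθ, Real.norm_eq_abs, abs_of_pos hr, mul_one]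
      rw [h1, h2, ← hc_def]
      have hcond : (ENNReal.ofReal M < ENNReal.ofReal (c * r ^ (α - (n:ℝ)))) ↔
          M < c * r ^ (α - (n:ℝ)) := by
        constructor
        · intro h
          by_contra hnot
          exact absurd (lt_of_lt_of_le h (ENNReal.ofReal_le_ofReal (not_lt.1 hnot)))
            (lt_irrefl _)
        · intro h; exact (ENNReal.ofReal_lt_ofReal_iff (lt_trans hM h)).2 h
      by_cases h : M < c * r ^ (α - (n:ℝ))
      · rw [if_pos (hcond.2 h), if_pos h, ← ENNReal.ofReal_mul (by positivity)]
        congr 1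
        have hpow : (r:ℝ) ^ (n - 1 : ℕ) = r ^ ((n:ℝ) - 1) := by
          rw [← Real.rpow_natCast r (n-1), Nat.cast_sub hn, Nat.cast_one]
        rw [hpow, ← mul_assoc, mul_comm (r ^ ((n:ℝ)-1)) c, mul_assoc, ← Real.rpow_add hr]
        ring_nf
      · rw [if_neg (fun hh => h (hcond.1 hh)), if_neg h, mul_zero]
    rw [setLIntegral_congr_fun measurableSet_Ioi hpt]
    by_cases hc : c = 0
    · have hpt2 : ∀ r : ℝ, r ∈ Ioi (0:ℝ) →
          (if M < c * r ^ (α - (n:ℝ)) then ENNReal.ofReal (c * r ^ (α - 1)) else 0)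
            = (0 : ℝ≥0∞) := by
        intro r _
        rw [if_neg]
        rw [hc, zero_mul]
        exact fun hh => absurd (hM.trans hh) (lt_irrefl _)
      rw [setLIntegral_congr_fun measurableSet_Ioi hpt2, lintegral_zero,
        hc, Real.zero_rpow (by positivity : s ≠ 0), ENNReal.ofReal_zero, mul_zero]
    · have hcpos : 0 < c := lt_of_le_of_ne hc0 (Ne.symm hc)
      set R : ℝ := (c / M) ^ ((n:ℝ) - α)⁻¹ with hR_def
      have hRpos : 0 < R := Real.rpow_pos_of_pos (by positivity) _
      have hRna : R ^ ((n:ℝ) - α) = c / M := by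
        rw [hR_def, ← Real.rpow_mul (by positivity), inv_mul_cancel₀ hnα.ne', Real.rpow_one]
      have hcond2 : ∀ r : ℝ, 0 < r → (M < c * r ^ (α - (n:ℝ)) ↔ r < R) := by
        intro r hr
        have hrn : (0:ℝ) < r ^ ((n:ℝ) - α) := Real.rpow_pos_of_pos hr _
        have e1 : c * r ^ (α - (n:ℝ)) = c / r ^ ((n:ℝ) - α) := by
          rw [show α - (n:ℝ) = -((n:ℝ) - α) by ring, Real.rpow_neg hr.le, div_eq_mul_inv]
        rw [e1, lt_div_iff₀ hrn, ← lt_div_iff₀' hM, ← hRna]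
        exact Real.rpow_lt_rpow_iff hr.le hRpos.le hnα
      have hpt3 : ∀ r : ℝ, r ∈ Ioi (0:ℝ) →
          (if M < c * r ^ (α - (n:ℝ)) then ENNReal.ofReal (c * r ^ (α - 1)) else 0)
            = (Iio R).indicator (fun t => ENNReal.ofReal (c * t ^ (α - 1))) r := by
        intro r hr
        rw [mem_Ioi] at hr
        rw [Set.indicator_apply]
        exact if_congr ((hcond2 r hr).trans Iff.rfl) rfl rfl
      rw [setLIntegral_congr_fun measurableSet_Ioi hpt3,
        lintegral_indicator measurableSet_Iio, Measure.restrict_restrict measurableSet_Iio,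
        inter_comm, Set.Ioi_inter_Iio]
      have hint : IntegrableOn (fun t : ℝ => c * t ^ (α - 1)) (Ioo 0 R) volume := by
        have h1 : IntervalIntegrable (fun t : ℝ => t ^ (α - 1)) volume 0 R :=
          intervalIntegral.intervalIntegrable_rpow' (by linarith)
        have h2 : IntegrableOn (fun t : ℝ => t ^ (α - 1)) (Ioc 0 R) volume :=
          (intervalIntegrable_iff_integrableOn_Ioc_of_le hRpos.le).1 h1
        exact (h2.mono_set Ioo_subset_Ioc_self).const_mul c
      have hnn : 0 ≤ᵐ[volume.restrict (Ioo 0 R)] fun t : ℝ => c * t ^ (α - 1) := by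
        filter_upwards [ae_restrict_mem measurableSet_Ioo] with t ht
        exact mul_nonneg hc0 (Real.rpow_nonneg ht.1.le _)
      rw [← ofReal_integral_eq_lintegral_ofReal hint hnn]
      have hval : ∫ t in Ioo (0:ℝ) R, c * t ^ (α - 1) = c * (R ^ α / α) := by
        rw [← integral_Ioc_eq_integral_Ioo, ← intervalIntegral.integral_of_le hRpos.le,
          intervalIntegral.integral_const_mul, integral_rpow (Or.inl (by linarith)),
          sub_add_cancel, Real.zero_rpow hα0.ne', sub_zero]
      rw [hval, ← ENNReal.ofReal_mul (by positivity)]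
      congr 1
      have hRα : R ^ α = c ^ (((n:ℝ)-α)⁻¹ * α) * M ^ (-(((n:ℝ)-α)⁻¹ * α)) := by
        rw [hR_def, ← Real.rpow_mul (by positivity), Real.div_rpow hcpos.le hM.le,
          Real.rpow_neg hM.le, div_eq_mul_inv]
      have he1 : 1 + ((n:ℝ)-α)⁻¹ * α = s := by rw [hs_def]; field_simp; ring
      have he2 : -(((n:ℝ)-α)⁻¹ * α) = 1 - s := by rw [hs_def]; field_simp; ring
      rw [hRα, ← he2, show s = 1 + ((n:ℝ)-α)⁻¹ * α from he1.symm,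
        Real.rpow_add hcpos, Real.rpow_one]
      ring
  refine Eq.trans (lintegral_congr fun θ => inner θ) ?_
  rw [lintegral_const_mul' _ _ ENNReal.ofReal_ne_top]

theorem stmt15_calc {α l I₀ s β : ℝ} (hα : 0 < α) (hl : 0 < l) (hI : 0 < I₀)
    (hβ : 0 < β) (hsβ : s * β = 1) :
    l * ((l / (2 * I₀)) ^ (1 - s) / α * I₀ / (l / 2)) ^ β = 2 * α ^ (-β) * I₀ := by
  have hM : 0 < l / (2*I₀) := by positivity
  have hMs : 0 < (l / (2*I₀)) ^ (1-s) := Real.rpow_pos_of_pos hM _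
  have hD : 0 < (l / (2*I₀)) ^ (1-s) / α * I₀ / (l/2) := by positivity
  have hαβ : 0 < α ^ (-β) := Real.rpow_pos_of_pos hα _
  apply Real.log_injOn_pos (mem_Ioi.mpr (by positivity)) (mem_Ioi.mpr (by positivity))
  rw [Real.log_mul hl.ne' (by positivity), Real.log_rpow hD,
    Real.log_div (by positivity) (by positivity), Real.log_mul (by positivity) hI.ne',
    Real.log_div hMs.ne' hα.ne', Real.log_rpow hM, Real.log_div hl.ne' (by positivity),
    Real.log_div hl.ne' two_ne_zero, Real.log_mul two_ne_zero hI.ne',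
    Real.log_mul (by positivity : (2:ℝ) * α ^ (-β) ≠ 0) hI.ne',
    Real.log_mul two_ne_zero hαβ.ne', Real.log_rpow hα]
  linear_combination (Real.log 2 + Real.log I₀ - Real.log l) * hsβ

theorem stmt15_main {n : ℕ} (α : ℝ) (hα0 : 0 < α) (hαn : α < n)
    (Ω : EuclideanSpace ℝ (Fin n) → ℝ) (hΩm : Measurable Ω)
    (hΩhom : ∀ s : ℝ, 0 < s → ∀ x : EuclideanSpace ℝ (Fin n), Ω (s • x) = Ω x)
    (hΩLq : (∫⁻ x' : sphere (0:EuclideanSpace ℝ (Fin n)) 1,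
        ENNReal.ofReal (|Ω (x' : EuclideanSpace ℝ (Fin n))| ^ ((n:ℝ) / ((n:ℝ) - α)))
        ∂(volume : Measure (EuclideanSpace ℝ (Fin n))).toSphere) < ⊤)
    (f : EuclideanSpace ℝ (Fin n) → ℝ) (hfm : Measurable f) (hfi : Integrable f)
    (l : ℝ) (hl : 0 < l) :
    ENNReal.ofReal l *
        (volume {x : EuclideanSpace ℝ (Fin n) |
          l < |∫ y, Ω (x - y) * ‖x - y‖ ^ (α - (n:ℝ)) * f y|}) ^ (((n:ℝ) - α) / n)
      ≤ ENNReal.ofReal (2 * α ^ (-(((n:ℝ) - α) / n))) *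
          ((∫⁻ x' : sphere (0:EuclideanSpace ℝ (Fin n)) 1,
              ENNReal.ofReal (|Ω (x' : EuclideanSpace ℝ (Fin n))| ^ ((n:ℝ) / ((n:ℝ) - α)))
              ∂(volume : Measure (EuclideanSpace ℝ (Fin n))).toSphere) ^ (((n:ℝ) - α) / n)) *
          ENNReal.ofReal (∫ y, |f y|) := by
  have hn : 0 < n := by exact_mod_cast hα0.trans hαn
  have hn' : (0:ℝ) < n := by exact_mod_cast hn
  have hnα : (0:ℝ) < (n:ℝ) - α := by linarith
  set β : ℝ := ((n:ℝ) - α) / n with hβ_def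
  set s : ℝ := (n:ℝ) / ((n:ℝ) - α) with hs_def
  have hβ : 0 < β := by rw [hβ_def]; positivity
  have hsβ : s * β = 1 := by rw [hs_def, hβ_def]; field_simp
  set A : ℝ≥0∞ := ∫⁻ x' : sphere (0:EuclideanSpace ℝ (Fin n)) 1,
      ENNReal.ofReal (|Ω (x' : EuclideanSpace ℝ (Fin n))| ^ s)
      ∂(volume : Measure (EuclideanSpace ℝ (Fin n))).toSphere with hA_def
  set I₀ : ℝ := ∫ y, |f y| with hI₀_def
  have hI₀0 : 0 ≤ I₀ := integral_nonneg fun y => abs_nonneg _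
  rcases eq_or_lt_of_le hI₀0 with hI0 | hIpos
  · have habs : (fun y => |f y|) =ᵐ[volume] 0 :=
      (integral_eq_zero_iff_of_nonneg (fun y => abs_nonneg (f y)) hfi.abs).1 hI0.symm
    have hf0 : f =ᵐ[volume] 0 := habs.mono fun y hy => by
      simpa using hy
    have hzero : ∀ x : EuclideanSpace ℝ (Fin n),
        (∫ y, Ω (x - y) * ‖x - y‖ ^ (α - (n:ℝ)) * f y) = 0 := by
      intro x
      refine integral_eq_zero_of_ae ?_
      filter_upwards [hf0] with y hy
      simp [hy]
    have hset : {x : EuclideanSpace ℝ (Fin n) |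
        l < |∫ y, Ω (x - y) * ‖x - y‖ ^ (α - (n:ℝ)) * f y|} = ∅ := by
      ext x
      simp [hzero x, lt_asymm hl]
    rw [hset, measure_empty, ENNReal.zero_rpow_of_pos hβ, mul_zero]
    exact zero_le
  · have hI₀ne : I₀ ≠ 0 := ne_of_gt hIpos
    set M : ℝ := l / (2 * I₀) with hM_def
    have hM : 0 < M := by rw [hM_def]; positivity
    set k : EuclideanSpace ℝ (Fin n) → ℝ≥0∞ :=
      fun z => ENNReal.ofReal (|Ω z| * ‖z‖ ^ (α - (n:ℝ))) with hk_def
    have hkm : Measurable k := by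
      rw [hk_def]; exact (hΩm.abs.mul (by measurability)).ennreal_ofReal
    set k₂ : EuclideanSpace ℝ (Fin n) → ℝ≥0∞ :=
      fun z => if ENNReal.ofReal M < k z then k z else 0 with hk₂_def
    set k₁ : EuclideanSpace ℝ (Fin n) → ℝ≥0∞ :=
      fun z => if ENNReal.ofReal M < k z then 0 else k z with hk₁_def
    have hk₂m : Measurable k₂ := by
      rw [hk₂_def]
      exact Measurable.ite (measurableSet_lt measurable_const hkm) hkm measurable_const
    have hk₁m : Measurable k₁ := by
      rw [hk₁_def]
      exact Measurable.ite (measurableSet_lt measurable_const hkm) measurable_const hkm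
    have hsplit : ∀ z, k z = k₁ z + k₂ z := by
      intro z
      rw [hk₁_def, hk₂_def]
      by_cases h : ENNReal.ofReal M < k z <;> simp [h]
    have hk₁le : ∀ z, k₁ z ≤ ENNReal.ofReal M := by
      intro z
      rw [hk₁_def]
      dsimp only
      split_ifs with h
      · exact zero_le
      · exact not_lt.1 h
    set F : EuclideanSpace ℝ (Fin n) → ℝ≥0∞ := fun y => ENNReal.ofReal |f y| with hF_def
    have hFm : Measurable F := by rw [hF_def]; exact hfm.abs.ennreal_ofReal
    have hFI : ∫⁻ y, F y = ENNReal.ofReal I₀ := by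
      rw [hF_def, hI₀_def]
      exact (ofReal_integral_eq_lintegral_ofReal hfi.abs
        (ae_of_all _ fun y => abs_nonneg _)).symm
    have step1 : ∀ x, ENNReal.ofReal |∫ y, Ω (x - y) * ‖x - y‖ ^ (α - (n:ℝ)) * f y|
        ≤ ∫⁻ y, k (x - y) * F y := by
      intro x
      rw [← Real.enorm_eq_ofReal_abs]
      refine le_trans (enorm_integral_le_lintegral_enorm _) (le_of_eq ?_)
      refine lintegral_congr fun y => ?_
      rw [Real.enorm_eq_ofReal_abs, abs_mul, abs_mul,
        abs_of_nonneg (Real.rpow_nonneg (norm_nonneg _) _), hk_def, hF_def,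
        ENNReal.ofReal_mul (by positivity)]
    have hΦ : Measurable fun p : EuclideanSpace ℝ (Fin n) × EuclideanSpace ℝ (Fin n) =>
        k₂ (p.1 - p.2) * F p.2 :=
      (hk₂m.comp (measurable_fst.sub measurable_snd)).mul (hFm.comp measurable_snd)
    have hg₂m : Measurable fun x => ∫⁻ y, k₂ (x - y) * F y := hΦ.lintegral_prod_right'
    have step2 : ∀ x, (∫⁻ y, k (x - y) * F y)
        ≤ ENNReal.ofReal (l / 2) + ∫⁻ y, k₂ (x - y) * F y := by
      intro x
      have hsum : (∫⁻ y, k (x - y) * F y)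
          = (∫⁻ y, k₁ (x - y) * F y) + ∫⁻ y, k₂ (x - y) * F y := by
        have hmeas1 : Measurable fun y : EuclideanSpace ℝ (Fin n) => k₁ (x - y) * F y :=
          (hk₁m.comp (measurable_const.sub measurable_id)).mul hFm
        rw [← lintegral_add_left hmeas1]
        refine lintegral_congr fun y => ?_
        rw [hsplit (x - y), add_mul]
      rw [hsum]
      refine add_le_add_left ?_ _
      calc (∫⁻ y, k₁ (x - y) * F y) ≤ ∫⁻ y, ENNReal.ofReal M * F y :=
            lintegral_mono fun y => mul_le_mul_left (hk₁le _) _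
        _ = ENNReal.ofReal M * ∫⁻ y, F y := lintegral_const_mul' _ _ ENNReal.ofReal_ne_top
        _ = ENNReal.ofReal (l / 2) := by
            rw [hFI, ← ENNReal.ofReal_mul hM.le]
            congr 1
            rw [hM_def]
            field_simp
    have hsub : {x : EuclideanSpace ℝ (Fin n) |
        l < |∫ y, Ω (x - y) * ‖x - y‖ ^ (α - (n:ℝ)) * f y|}
        ⊆ {x | ENNReal.ofReal (l / 2) ≤ ∫⁻ y, k₂ (x - y) * F y} := by
      intro x hx
      simp only [mem_setOf_eq] at hx ⊢
      by_contra h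
      push_neg at h
      have h1 : ENNReal.ofReal l < ∫⁻ y, k (x - y) * F y :=
        lt_of_lt_of_le ((ENNReal.ofReal_lt_ofReal_iff (hl.trans hx)).2 hx) (step1 x)
      have h2 := lt_of_lt_of_le h1 (step2 x)
      have h3 : ENNReal.ofReal (l/2) + (∫⁻ y, k₂ (x - y) * F y)
          < ENNReal.ofReal (l/2) + ENNReal.ofReal (l/2) :=
        ENNReal.add_lt_add_left ENNReal.ofReal_ne_top h
      rw [← ENNReal.ofReal_add (by positivity) (by positivity)] at h3
      have h4 : ENNReal.ofReal l < ENNReal.ofReal (l/2 + l/2) := h2.trans h3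
      rw [show l/2 + l/2 = l by ring] at h4
      exact lt_irrefl _ h4
    have hT₂ : (∫⁻ z, k₂ z) = ENNReal.ofReal (M ^ (1 - s) / α) * A := by
      have hker := stmt15_kernel α hα0 hαn Ω hΩm hΩhom M hM
      rw [hk₂_def, hk_def, hs_def, hA_def, hs_def]
      exact hker
    have hT₂ne : (∫⁻ z, k₂ z) ≠ ⊤ := by
      rw [hT₂]
      exact ENNReal.mul_ne_top ENNReal.ofReal_ne_top hΩLq.ne
    have htrans : ∀ y : EuclideanSpace ℝ (Fin n), (∫⁻ x, k₂ (x - y)) = ∫⁻ z, k₂ z := by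
      intro y
      simp_rw [sub_eq_add_neg]
      exact lintegral_add_right_eq_self k₂ (-y)
    have hton : (∫⁻ x, ∫⁻ y, k₂ (x - y) * F y)
        = ENNReal.ofReal (M ^ (1 - s) / α) * A * ENNReal.ofReal I₀ := by
      rw [lintegral_lintegral_swap hΦ.aemeasurable]
      calc (∫⁻ y, ∫⁻ x, k₂ (x - y) * F y)
          = ∫⁻ y, (∫⁻ z, k₂ z) * F y := by
            refine lintegral_congr fun y => ?_
            rw [lintegral_mul_const' _ _ ENNReal.ofReal_ne_top, htrans y]
        _ = (∫⁻ z, k₂ z) * ∫⁻ y, F y := lintegral_const_mul' _ _ hT₂ne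
        _ = _ := by rw [hT₂, hFI]
    have hcheb : volume {x : EuclideanSpace ℝ (Fin n) |
        ENNReal.ofReal (l / 2) ≤ ∫⁻ y, k₂ (x - y) * F y}
        ≤ (ENNReal.ofReal (M ^ (1 - s) / α) * A * ENNReal.ofReal I₀)
            / ENNReal.ofReal (l/2) := by
      rw [← hton]
      exact meas_ge_le_lintegral_div hg₂m.aemeasurable
        (ne_of_gt (ENNReal.ofReal_pos.2 (half_pos hl))) ENNReal.ofReal_ne_top
    set D₀ : ℝ := M ^ (1 - s) / α * I₀ / (l / 2) with hD₀_def
    have hD₀ : 0 < D₀ := by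
      rw [hD₀_def]
      exact div_pos (mul_pos (div_pos (Real.rpow_pos_of_pos hM _) hα0) hIpos) (half_pos hl)
    have hvol : volume {x : EuclideanSpace ℝ (Fin n) |
        l < |∫ y, Ω (x - y) * ‖x - y‖ ^ (α - (n:ℝ)) * f y|} ≤ ENNReal.ofReal D₀ * A := by
      refine le_trans (measure_mono hsub) (le_trans hcheb (le_of_eq ?_))
      rw [hD₀_def, ENNReal.ofReal_div_of_pos (half_pos hl),
        ENNReal.ofReal_mul (le_of_lt (div_pos (Real.rpow_pos_of_pos hM _) hα0))]
      simp only [div_eq_mul_inv]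
      ring
    calc ENNReal.ofReal l * (volume {x : EuclideanSpace ℝ (Fin n) |
          l < |∫ y, Ω (x - y) * ‖x - y‖ ^ (α - (n:ℝ)) * f y|}) ^ β
        ≤ ENNReal.ofReal l * (ENNReal.ofReal D₀ * A) ^ β :=
          mul_le_mul_right (ENNReal.rpow_le_rpow hvol hβ.le) _
      _ = ENNReal.ofReal (l * D₀ ^ β) * A ^ β := by
          rw [ENNReal.mul_rpow_of_nonneg _ _ hβ.le,
            ENNReal.ofReal_rpow_of_nonneg hD₀.le hβ.le, ← mul_assoc,
            ← ENNReal.ofReal_mul hl.le]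
      _ = ENNReal.ofReal (2 * α ^ (-β) * I₀) * A ^ β := by
          congr 2
          rw [hD₀_def, hM_def]
          exact stmt15_calc hα0 hl hIpos hβ hsβ
      _ = ENNReal.ofReal (2 * α ^ (-β)) * A ^ β * ENNReal.ofReal I₀ := by
          rw [ENNReal.ofReal_mul (mul_nonneg (by norm_num) (Real.rpow_nonneg hα0.le _))]
          ring

end Stmt15Aux

/-- Weak Young inequality application: if `Ω` is homogeneous of degree `0` with
`Ω ∈ L^{n/(n-α)}(S^{n-1})`, `α ∈ (0,n)`, then `T_Ω^α f(x) = ∫ Ω(x-y)|x-y|^{α-n} f(y) dy`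
is bounded from `L¹(ℝⁿ)` to `L^{n/(n-α),∞}(ℝⁿ)` with norm `≲ ‖Ω‖_{L^{n/(n-α)}(S^{n-1})}`. -/
theorem stmt_15 {n : ℕ} (α : ℝ) (hα0 : 0 < α) (hαn : α < n)
    (p q r : ℝ) (hp : 1 ≤ p) (hq : 1 < q) (hr : 1 < r)
    (hpqr : 1 + 1 / q = 1 / p + 1 / r)
    (Ω : EuclideanSpace ℝ (Fin n) → ℝ) (hΩm : Measurable Ω)
    (hΩhom : ∀ s : ℝ, 0 < s → ∀ x : EuclideanSpace ℝ (Fin n), Ω (s • x) = Ω x)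
    (hΩLq : (∫⁻ x' : sphere (0:EuclideanSpace ℝ (Fin n)) 1,
        ENNReal.ofReal (|Ω (x' : EuclideanSpace ℝ (Fin n))| ^ ((n:ℝ) / ((n:ℝ) - α)))
        ∂(volume : Measure (EuclideanSpace ℝ (Fin n))).toSphere) < ⊤) :
    ∃ C : ℝ≥0∞, C ≠ ⊤ ∧
      ∀ f : EuclideanSpace ℝ (Fin n) → ℝ, Integrable f →
        ∀ l : ℝ, 0 < l →
          ENNReal.ofReal l *
              (volume {x : EuclideanSpace ℝ (Fin n) |
                l < |∫ y, Ω (x - y) * ‖x - y‖ ^ (α - (n:ℝ)) * f y|}) ^ (((n:ℝ) - α) / n)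
            ≤ C *
                ((∫⁻ x' : sphere (0:EuclideanSpace ℝ (Fin n)) 1,
                    ENNReal.ofReal (|Ω (x' : EuclideanSpace ℝ (Fin n))| ^ ((n:ℝ) / ((n:ℝ) - α)))
                    ∂(volume : Measure (EuclideanSpace ℝ (Fin n))).toSphere)
                  ^ (((n:ℝ) - α) / n)) *
                ENNReal.ofReal (∫ y, |f y|) := by
  refine ⟨ENNReal.ofReal (2 * α ^ (-(((n:ℝ) - α) / n))), ENNReal.ofReal_ne_top, ?_⟩
  intro f hfi l hl
  obtain ⟨f', hf'm, hae⟩ : ∃ f' : EuclideanSpace ℝ (Fin n) → ℝ,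
      Measurable f' ∧ f =ᵐ[volume] f' :=
    ⟨hfi.1.mk f, hfi.1.stronglyMeasurable_mk.measurable, hfi.1.ae_eq_mk⟩
  have hfi' : Integrable f' := hfi.congr hae
  have hsets : ∀ x : EuclideanSpace ℝ (Fin n),
      (∫ y, Ω (x - y) * ‖x - y‖ ^ (α - (n:ℝ)) * f y)
        = ∫ y, Ω (x - y) * ‖x - y‖ ^ (α - (n:ℝ)) * f' y := fun x =>
    integral_congr_ae (hae.mono fun y hy => by simp only [hy])
  have hint : (∫ y, |f y|) = ∫ y, |f' y| :=
    integral_congr_ae (hae.mono fun y hy => by simp only [hy])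
  simp_rw [hsets, hint]
  exact stmt15_main α hα0 hαn Ω hΩm hΩhom hΩLq f' hf'm hfi' l hl
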